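/- Lemma (compatibility of the pushed-forward almost-complex structure, the chart version of Lemma 2.15): for every point p = (θ,t,r,s) with |t| < 1/2 and any positive reals ρ₁, ρ₂ > 0, the derivative DF(p) : ℝ⁴ → ℝ⁴ is invertible, and the linear map J := DF(p) ∘ J₀ ∘ DF(p)⁻¹ (where J₀ is determined by J₀ e_θ = −ρ₁ e_t, J₀ e_t = ρ₁⁻¹ e_θ, J₀ e_r = −ρ₂ e_s, J₀ e_s = ρ₂⁻¹ e_r in the source coordinates) is compatible with the standard symplectic form ω on the target ℝ⁴: J ∘ J = −id, ω(Ju, Jv) = ω(u,v) for all u, v, and ω(u, Ju) > 0 for all u ≠ 0. -/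

import Mathlib

noncomputable section

/-- The standard symplectic form on the target `ℝ⁴` with coordinates
`(x₁, y₁, x₂, y₂)` (indices `0, 1, 2, 3`): `ω = dx₁ ∧ dy₁ + dx₂ ∧ dy₂`. -/
def omega4 (u v : Fin 4 → ℝ) : ℝ :=
  u 0 * v 1 - u 1 * v 0 + u 2 * v 3 - u 3 * v 2

/-- The map `F(θ,t,r,s) = (f(t) cos θ, f(t) sin θ, s, r)` with
`f(t) = √(C₁² + 2t)`, in source coordinates `(θ, t, r, s)`. -/
def Fmap (C₁ : ℝ) (p : Fin 4 → ℝ) : Fin 4 → ℝ :=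
  ![Real.sqrt (C₁ ^ 2 + 2 * p 1) * Real.cos (p 0),
    Real.sqrt (C₁ ^ 2 + 2 * p 1) * Real.sin (p 0),
    p 3, p 2]

/-- The linear map `J₀` in the source coordinates `(θ, t, r, s)`, determined by
`J₀ e_θ = −ρ₁ e_t`, `J₀ e_t = ρ₁⁻¹ e_θ`, `J₀ e_r = −ρ₂ e_s`, `J₀ e_s = ρ₂⁻¹ e_r`. -/
def J0 (ρ₁ ρ₂ : ℝ) (u : Fin 4 → ℝ) : Fin 4 → ℝ :=
  ![ρ₁⁻¹ * u 1, -(ρ₁ * u 0), ρ₂⁻¹ * u 3, -(ρ₂ * u 2)]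

open ContinuousLinearMap in
/-- the derivative CLM -/
def DF (a θ : ℝ) : (Fin 4 → ℝ) →L[ℝ] (Fin 4 → ℝ) :=
  ContinuousLinearMap.pi
    ![(-(a * Real.sin θ)) • proj 0 + (a⁻¹ * Real.cos θ) • proj 1,
      (a * Real.cos θ) • proj 0 + (a⁻¹ * Real.sin θ) • proj 1,
      proj 3, proj 2]

lemma DF_apply (a θ : ℝ) (v : Fin 4 → ℝ) :
    DF a θ v = ![-(a * Real.sin θ) * v 0 + a⁻¹ * Real.cos θ * v 1,
      a * Real.cos θ * v 0 + a⁻¹ * Real.sin θ * v 1, v 3, v 2] := by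
  funext i
  fin_cases i <;>
    simp [DF, Matrix.cons_val_zero, Matrix.cons_val_one, ContinuousLinearMap.pi_apply] <;> ring

lemma hasFDeriv (C₁ : ℝ) (p : Fin 4 → ℝ) (hpos : 0 < C₁ ^ 2 + 2 * p 1) :
    HasFDerivAt (Fmap C₁) (DF (Real.sqrt (C₁ ^ 2 + 2 * p 1)) (p 0)) p := by
  set a := Real.sqrt (C₁ ^ 2 + 2 * p 1) with ha_def
  have ha : 0 < a := Real.sqrt_pos.mpr hpos
  have hsq : HasDerivAt (fun x : ℝ => Real.sqrt (C₁ ^ 2 + 2 * x)) a⁻¹ (p 1) := by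
    have h1 : HasDerivAt (fun x : ℝ => C₁ ^ 2 + 2 * x) 2 (p 1) := by
      simpa using ((hasDerivAt_id (p 1)).const_mul 2).const_add (C₁ ^ 2)
    have := h1.sqrt (by positivity)
    convert this using 1
    rw [← ha_def]
    field_simp
  have hproj1 := hasFDerivAt_apply (𝕜 := ℝ) (F' := fun _ : Fin 4 => ℝ) 1 p
  have hproj0 := hasFDerivAt_apply (𝕜 := ℝ) (F' := fun _ : Fin 4 => ℝ) 0 p
  have hg : HasFDerivAt (fun q : Fin 4 → ℝ => Real.sqrt (C₁ ^ 2 + 2 * q 1))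
      (a⁻¹ • (ContinuousLinearMap.proj (1 : Fin 4) : (Fin 4 → ℝ) →L[ℝ] ℝ)) p := HasDerivAt.comp_hasFDerivAt (h₂ := fun x : ℝ => Real.sqrt (C₁ ^ 2 + 2 * x)) (f := fun q : Fin 4 → ℝ => q 1) p hsq hproj1
  have hcos : HasFDerivAt (fun q : Fin 4 → ℝ => Real.cos (q 0))
      ((-Real.sin (p 0)) • (ContinuousLinearMap.proj (0 : Fin 4) : (Fin 4 → ℝ) →L[ℝ] ℝ)) p :=
    HasDerivAt.comp_hasFDerivAt (h₂ := Real.cos) p (Real.hasDerivAt_cos (p 0)) hproj0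
  have hsin : HasFDerivAt (fun q : Fin 4 → ℝ => Real.sin (q 0))
      ((Real.cos (p 0)) • (ContinuousLinearMap.proj (0 : Fin 4) : (Fin 4 → ℝ) →L[ℝ] ℝ)) p :=
    HasDerivAt.comp_hasFDerivAt (h₂ := Real.sin) p (Real.hasDerivAt_sin (p 0)) hproj0
  have h0 : ((ContinuousLinearMap.proj (0 : Fin 4) : (Fin 4 → ℝ) →L[ℝ] ℝ)).comp
        (DF a (p 0)) =
      a • (-Real.sin (p 0)) • (ContinuousLinearMap.proj (0 : Fin 4) : (Fin 4 → ℝ) →L[ℝ] ℝ) +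
        Real.cos (p 0) • a⁻¹ • (ContinuousLinearMap.proj (1 : Fin 4) : (Fin 4 → ℝ) →L[ℝ] ℝ) := by
    apply ContinuousLinearMap.ext; intro v
    simp [DF, ContinuousLinearMap.pi_apply]; ring
  have h1 : ((ContinuousLinearMap.proj (1 : Fin 4) : (Fin 4 → ℝ) →L[ℝ] ℝ)).comp
        (DF a (p 0)) =
      a • (Real.cos (p 0)) • (ContinuousLinearMap.proj (0 : Fin 4) : (Fin 4 → ℝ) →L[ℝ] ℝ) +
        Real.sin (p 0) • a⁻¹ • (ContinuousLinearMap.proj (1 : Fin 4) : (Fin 4 → ℝ) →L[ℝ] ℝ) := by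
    apply ContinuousLinearMap.ext; intro v
    simp [DF, ContinuousLinearMap.pi_apply]; ring
  have h2 : ((ContinuousLinearMap.proj (2 : Fin 4) : (Fin 4 → ℝ) →L[ℝ] ℝ)).comp
        (DF a (p 0)) = (ContinuousLinearMap.proj (3 : Fin 4) : (Fin 4 → ℝ) →L[ℝ] ℝ) := by
    apply ContinuousLinearMap.ext; intro v
    simp [DF, ContinuousLinearMap.pi_apply]
  have h3 : ((ContinuousLinearMap.proj (3 : Fin 4) : (Fin 4 → ℝ) →L[ℝ] ℝ)).comp
        (DF a (p 0)) = (ContinuousLinearMap.proj (2 : Fin 4) : (Fin 4 → ℝ) →L[ℝ] ℝ) := by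
    apply ContinuousLinearMap.ext; intro v
    simp [DF, ContinuousLinearMap.pi_apply]
  apply hasFDerivAt_pi''
  intro i
  fin_cases i
  · exact h0 ▸ (hg.mul hcos)
  · exact h1 ▸ (hg.mul hsin)
  · exact h2 ▸ hasFDerivAt_apply (𝕜 := ℝ) (F' := fun _ : Fin 4 => ℝ) 3 p
  · exact h3 ▸ hasFDerivAt_apply (𝕜 := ℝ) (F' := fun _ : Fin 4 => ℝ) 2 p

def DFinv (a θ : ℝ) (y : Fin 4 → ℝ) : Fin 4 → ℝ :=
  ![a⁻¹ * (-Real.sin θ * y 0 + Real.cos θ * y 1),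
    a * (Real.cos θ * y 0 + Real.sin θ * y 1), y 3, y 2]

lemma DF_DFinv (a θ : ℝ) (ha : a ≠ 0) (y : Fin 4 → ℝ) :
    DF a θ (DFinv a θ y) = y := by
  funext i
  have h := Real.sin_sq_add_cos_sq θ
  fin_cases i
  · simp [DF_apply, DFinv]; field_simp; linear_combination (y 0) * h
  · simp [DF_apply, DFinv]; field_simp; linear_combination (y 1) * h
  · simp [DF_apply, DFinv]
  · simp [DF_apply, DFinv]

lemma DFinv_DF (a θ : ℝ) (ha : a ≠ 0) (v : Fin 4 → ℝ) :
    DFinv a θ (DF a θ v) = v := by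
  funext i
  have h := Real.sin_sq_add_cos_sq θ
  fin_cases i
  · simp [DF_apply, DFinv]; field_simp; linear_combination (a * a * v 0) * h
  · simp [DF_apply, DFinv]; field_simp; linear_combination (v 1) * h
  · simp [DF_apply, DFinv]
  · simp [DF_apply, DFinv]

lemma omega4_DF (a θ : ℝ) (ha : a ≠ 0) (x y : Fin 4 → ℝ) :
    omega4 (DF a θ x) (DF a θ y) =
      -(x 0 * y 1 - x 1 * y 0 + x 2 * y 3 - x 3 * y 2) := by
  simp only [omega4, DF_apply]
  simp only [Matrix.cons_val_zero, Matrix.cons_val_one, Matrix.head_cons,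
    Matrix.cons_val_two, Matrix.tail_cons, Matrix.cons_val_three]
  have h' : a * a⁻¹ = 1 := mul_inv_cancel₀ ha
  linear_combination (x 1 * y 0 - x 0 * y 1) * (a * a⁻¹) * Real.sin_sq_add_cos_sq θ +
    (x 1 * y 0 - x 0 * y 1) * h'

lemma J0_J0 (ρ₁ ρ₂ : ℝ) (h1 : ρ₁ ≠ 0) (h2 : ρ₂ ≠ 0) (w : Fin 4 → ℝ) :
    J0 ρ₁ ρ₂ (J0 ρ₁ ρ₂ w) = -w := by
  funext i
  fin_cases i <;> simp [J0] <;> field_simp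


/-- Chart version of Lemma 2.15: `DF(p)` is invertible, and the pushed-forward
almost-complex structure `J = DF(p) ∘ J₀ ∘ DF(p)⁻¹` (characterized by the
intertwining relation `J ∘ DF(p) = DF(p) ∘ J₀`) is compatible with the standard
symplectic form `ω` on the target. -/
theorem pushforward_compatible (C₁ : ℝ) (hC : 100 < C₁)
    (ρ₁ ρ₂ : ℝ) (hρ₁ : 0 < ρ₁) (hρ₂ : 0 < ρ₂)
    (p : Fin 4 → ℝ) (ht : |p 1| < 1 / 2) :
    Function.Bijective (fderiv ℝ (Fmap C₁) p) ∧
    ∀ J : (Fin 4 → ℝ) → (Fin 4 → ℝ), IsLinearMap ℝ J →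
      (∀ v : Fin 4 → ℝ,
        J (fderiv ℝ (Fmap C₁) p v) = fderiv ℝ (Fmap C₁) p (J0 ρ₁ ρ₂ v)) →
      (∀ u : Fin 4 → ℝ, J (J u) = -u) ∧
      (∀ u v : Fin 4 → ℝ, omega4 (J u) (J v) = omega4 u v) ∧
      (∀ u : Fin 4 → ℝ, u ≠ 0 → 0 < omega4 u (J u)) := by
  have habs := abs_lt.mp ht
  have hpos : 0 < C₁ ^ 2 + 2 * p 1 := by nlinarith
  set a := Real.sqrt (C₁ ^ 2 + 2 * p 1) with ha_def
  set θ := p 0 with hθ_def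
  have ha : 0 < a := Real.sqrt_pos.mpr hpos
  have ha' : a ≠ 0 := ne_of_gt ha
  have hfd : fderiv ℝ (Fmap C₁) p = DF a θ := (hasFDeriv C₁ p hpos).fderiv
  have hbij : Function.Bijective (DF a θ) :=
    Function.bijective_iff_has_inverse.mpr
      ⟨DFinv a θ, DFinv_DF a θ ha', DF_DFinv a θ ha'⟩
  constructor
  · rw [hfd]; exact hbij
  intro J hJ hcomm
  rw [hfd] at hcomm
  -- key formula
  have hkey : ∀ u : Fin 4 → ℝ, J u = DF a θ (J0 ρ₁ ρ₂ (DFinv a θ u)) := by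
    intro u
    have := hcomm (DFinv a θ u)
    rwa [DF_DFinv a θ ha'] at this
  refine ⟨?_, ?_, ?_⟩
  · intro u
    rw [hkey u, hkey (DF a θ (J0 ρ₁ ρ₂ (DFinv a θ u))), DFinv_DF a θ ha',
      J0_J0 ρ₁ ρ₂ (ne_of_gt hρ₁) (ne_of_gt hρ₂), map_neg, DF_DFinv a θ ha']
  · intro u v
    rw [hkey u, hkey v, omega4_DF a θ ha']
    have hu := DF_DFinv a θ ha' u
    have hv := DF_DFinv a θ ha' v
    set w := DFinv a θ u with hw
    set z := DFinv a θ v with hz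
    have h1 : omega4 u v = omega4 (DF a θ w) (DF a θ z) := by rw [hu, hv]
    rw [h1, omega4_DF a θ ha']
    have hr1 : ρ₁⁻¹ * ρ₁ = 1 := inv_mul_cancel₀ (ne_of_gt hρ₁)
    have hr2 : ρ₂⁻¹ * ρ₂ = 1 := inv_mul_cancel₀ (ne_of_gt hρ₂)
    simp only [J0, Matrix.cons_val_zero, Matrix.cons_val_one, Matrix.head_cons,
      Matrix.cons_val_two, Matrix.tail_cons, Matrix.cons_val_three]
    linear_combination (w 1 * z 0 - w 0 * z 1) * hr1 + (w 3 * z 2 - w 2 * z 3) * hr2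
  · intro u hu
    have hWu := DF_DFinv a θ ha' u
    set w := DFinv a θ u with hw
    have hwne : w ≠ 0 := by
      intro h0
      apply hu
      rw [← hWu, h0, map_zero]
    rw [hkey u]
    have h1 : omega4 u (DF a θ (J0 ρ₁ ρ₂ w)) =
        omega4 (DF a θ w) (DF a θ (J0 ρ₁ ρ₂ w)) := by rw [hWu]
    rw [h1, omega4_DF a θ ha']
    simp only [J0, Matrix.cons_val_zero, Matrix.cons_val_one, Matrix.head_cons,
      Matrix.cons_val_two, Matrix.tail_cons, Matrix.cons_val_three]
    have : ∃ i, w i ≠ 0 := by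
      by_contra hcon
      push_neg at hcon
      exact hwne (funext hcon)
    obtain ⟨i, hi⟩ := this
    have hρ₁' : 0 < ρ₁⁻¹ := inv_pos.mpr hρ₁
    have hρ₂' : 0 < ρ₂⁻¹ := inv_pos.mpr hρ₂
    have n0 := mul_nonneg hρ₁.le (mul_self_nonneg (w 0))
    have n1 := mul_nonneg hρ₁'.le (mul_self_nonneg (w 1))
    have n2 := mul_nonneg hρ₂.le (mul_self_nonneg (w 2))
    have n3 := mul_nonneg hρ₂'.le (mul_self_nonneg (w 3))
    fin_cases i
    · have h' : w 0 ≠ 0 := hi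
      nlinarith [mul_pos hρ₁ (mul_self_pos.mpr h'), n1, n2, n3]
    · have h' : w 1 ≠ 0 := hi
      nlinarith [mul_pos hρ₁' (mul_self_pos.mpr h'), n0, n2, n3]
    · have h' : w 2 ≠ 0 := hi
      nlinarith [mul_pos hρ₂ (mul_self_pos.mpr h'), n0, n1, n3]
    · have h' : w 3 ≠ 0 := hi
      nlinarith [mul_pos hρ₂' (mul_self_pos.mpr h'), n0, n1, n2]
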